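/- Let b be a nonzero real number and define σ(b) = inf{ t > 0 : Σ_{n ∈ ℤ} Σ_{k ∈ ℕ} exp(−t·((bn)²/2 + k))·exp((bn)²)·L_k(−2(bn)²) < ∞ }. Then σ(b) = τ. -/

import Mathlib

/-- The Laguerre polynomial `L_k(x) = ∑_{m=0}^k (1/m!) C(k,m) (-x)^m`. -/
noncomputable def Lag (k : ℕ) (x : ℝ) : ℝ :=
  ∑ m ∈ Finset.range (k + 1), (1 / (m.factorial : ℝ)) * (k.choose m : ℝ) * (-x) ^ m

/-- `σ(b)`: the infimum of `t > 0` for which the double series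
`∑_{n ∈ ℤ} ∑_{k ∈ ℕ} exp(-t((bn)²/2+k))·exp((bn)²)·L_k(-2(bn)²)` converges. -/
noncomputable def sigma (b : ℝ) : ℝ :=
  sInf {t : ℝ | 0 < t ∧ Summable (fun p : ℤ × ℕ =>
    Real.exp (-t * ((b * (p.1 : ℝ)) ^ 2 / 2 + (p.2 : ℝ))) *
      Real.exp ((b * (p.1 : ℝ)) ^ 2) * Lag p.2 (-2 * (b * (p.1 : ℝ)) ^ 2))}


lemma lag_nonneg (k : ℕ) {x : ℝ} (hx : x ≤ 0) : 0 ≤ Lag k x := by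
  apply Finset.sum_nonneg
  intro m _
  have h : 0 ≤ -x := by linarith
  positivity

open Finset in
lemma lag_gen {y z : ℝ} (hy : 0 ≤ y) (hz0 : 0 ≤ z) (hz1 : z < 1) :
    HasSum (fun k : ℕ => Lag k (-y) * z ^ k) (Real.exp (y * z / (1 - z)) / (1 - z)) := by
  have hz1' : (0:ℝ) < 1 - z := by linarith
  set g : ℕ × ℕ → ℝ := fun p =>
    (1 / (p.1.factorial : ℝ)) * ((p.1 + p.2).choose p.1 : ℝ) * y ^ p.1 * z ^ (p.1 + p.2) with hg
  have hgnn : 0 ≤ g := fun p => by positivity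
  have hrow : ∀ m : ℕ, HasSum (fun j => g (m, j))
      ((1 / (m.factorial : ℝ)) * y ^ m * z ^ m * (1 / (1 - z) ^ (m + 1))) := by
    intro m
    have hzn : ‖z‖ < 1 := by rwa [Real.norm_eq_abs, abs_of_nonneg hz0]
    have h := (hasSum_choose_mul_geometric_of_norm_lt_one (𝕜 := ℝ) m hzn).mul_left
      ((1 / (m.factorial : ℝ)) * y ^ m * z ^ m)
    convert! h using 2 with j
    simp only [hg, pow_add, Nat.add_comm m j]
    ring
  have hcol : HasSum (fun m : ℕ => (1 / (m.factorial : ℝ)) * y ^ m * z ^ m * (1 / (1 - z) ^ (m + 1)))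
      (Real.exp (y * z / (1 - z)) / (1 - z)) := by
    have h := (NormedSpace.expSeries_div_hasSum_exp (𝔸 := ℝ) (y * z / (1 - z))).mul_left
      (1 / (1 - z))
    rw [← Real.exp_eq_exp_ℝ] at h
    have hfun : (fun m : ℕ => (1 / (m.factorial : ℝ)) * y ^ m * z ^ m * (1 / (1 - z) ^ (m + 1)))
        = fun m : ℕ => 1 / (1 - z) * ((y * z / (1 - z)) ^ m / (m.factorial : ℝ)) := by
      funext m
      have hm : (m.factorial : ℝ) ≠ 0 := Nat.cast_ne_zero.mpr m.factorial_ne_zero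
      rw [div_pow]
      field_simp
      ring
    have hv : Real.exp (y * z / (1 - z)) / (1 - z) = 1 / (1 - z) * Real.exp (y * z / (1 - z)) := by
      ring
    rw [hfun, hv]
    exact h
  have hsum : Summable g := by
    refine (summable_prod_of_nonneg hgnn).mpr ⟨fun m => (hrow m).summable, ?_⟩
    exact hcol.summable.congr fun m => ((hrow m).tsum_eq).symm
  have hS : HasSum g (Real.exp (y * z / (1 - z)) / (1 - z)) := by
    have hts : (∑' p, g p) = Real.exp (y * z / (1 - z)) / (1 - z) := by
      rw [Summable.tsum_prod' hsum fun m => (hrow m).summable,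
        tsum_congr fun m => (hrow m).tsum_eq, hcol.tsum_eq]
    exact hts ▸ hsum.hasSum
  have h2 : HasSum (g ∘ Finset.HasAntidiagonal.sigmaAntidiagonalEquivProd) (Real.exp (y * z / (1 - z)) / (1 - z)) :=
    Finset.HasAntidiagonal.sigmaAntidiagonalEquivProd.hasSum_iff.mpr hS
  have h3 := h2.sigma (fun k => hasSum_fintype (fun c : (antidiagonal k : Finset (ℕ × ℕ)) =>
    (g ∘ Finset.HasAntidiagonal.sigmaAntidiagonalEquivProd) ⟨k, c⟩))
  convert h3 using 2 with k
  simp only [Function.comp_apply, Finset.HasAntidiagonal.sigmaAntidiagonalEquivProd_apply]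
  rw [Finset.sum_coe_sort (antidiagonal k) g,
    Finset.Nat.sum_antidiagonal_eq_sum_range_succ_mk g k, Lag, Finset.sum_mul]
  refine Finset.sum_congr rfl fun i hi => ?_
  rw [Finset.mem_range] at hi
  have h4 : i + (k - i) = k := by omega
  simp only [hg, h4, neg_neg]
  try ring

noncomputable def ct (t : ℝ) : ℝ := 1 - t / 2 + 2 / (Real.exp t - 1)

lemma inner_hasSum {t : ℝ} (ht : 0 < t) {s : ℝ} (hs : 0 ≤ s) :
    HasSum (fun k : ℕ => Real.exp (-t * (s / 2 + (k : ℝ))) * Real.exp s * Lag k (-2 * s))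
      (Real.exp (s * ct t) / (1 - Real.exp (-t))) := by
  have hz0 : (0:ℝ) ≤ Real.exp (-t) := (Real.exp_pos _).le
  have hE1 : 1 < Real.exp t := by
    have := Real.exp_lt_exp.mpr ht
    rwa [Real.exp_zero] at this
  have hz1 : Real.exp (-t) < 1 := by
    rw [Real.exp_neg]
    exact inv_lt_one_of_one_lt₀ hE1
  have h := (lag_gen (y := 2 * s) (by linarith) hz0 hz1).mul_left
    (Real.exp (-t * (s / 2)) * Real.exp s)
  convert! h using 1
  · funext k
    have he : Real.exp (-t * (s / 2 + (k : ℝ)))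
        = Real.exp (-t * (s / 2)) * Real.exp (-t) ^ k := by
      rw [← Real.exp_nat_mul, ← Real.exp_add]
      ring_nf
    have h2 : (-2 : ℝ) * s = -(2 * s) := by ring
    rw [he, h2]
    ring
  · set E := Real.exp t with hEdef
    have hzE : Real.exp (-t) = E⁻¹ := Real.exp_neg t
    have hE0 : E ≠ 0 := by positivity
    have hEm1 : E - 1 ≠ 0 := ne_of_gt (by linarith)
    have hinv : (1:ℝ) - E⁻¹ ≠ 0 := by
      have : E⁻¹ < 1 := inv_lt_one_of_one_lt₀ hE1
      exact ne_of_gt (by linarith)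
    rw [hzE, mul_div_assoc', ← Real.exp_add, ← Real.exp_add]
    congr 1
    rw [ct, ← hEdef]
    field_simp
    ring

lemma summable_exp_mul_sq {c : ℝ} (hc : c < 0) :
    Summable (fun n : ℤ => Real.exp (c * (n : ℝ) ^ 2)) := by
  have hnat : Summable (fun n : ℕ => Real.exp (c * (n : ℝ) ^ 2)) := by
    have hlt : Real.exp c < 1 := by
      have := Real.exp_lt_exp.mpr hc
      rwa [Real.exp_zero] at this
    refine Summable.of_nonneg_of_le (fun n => (Real.exp_pos _).le) (fun n => ?_)
      (summable_geometric_of_lt_one (Real.exp_pos _).le hlt)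
    rw [← Real.exp_nat_mul]
    apply Real.exp_le_exp.mpr
    have h1 : (n : ℝ) ≤ (n : ℝ) ^ 2 := by
      exact_mod_cast Nat.le_self_pow two_ne_zero n
    nlinarith
  apply Summable.of_nat_of_neg
  · exact hnat.congr fun n => by push_cast; ring_nf
  · exact hnat.congr fun n => by push_cast; ring_nf

lemma ct_strict_anti {t1 t2 : ℝ} (h1 : 0 < t1) (h12 : t1 < t2) : ct t2 < ct t1 := by
  have e1 : (0:ℝ) < Real.exp t1 - 1 := by
    have := Real.exp_lt_exp.mpr h1
    rw [Real.exp_zero] at this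
    linarith
  have e2 : Real.exp t1 - 1 < Real.exp t2 - 1 := by
    have := Real.exp_lt_exp.mpr h12
    linarith
  have := div_lt_div_of_pos_left (by norm_num : (0:ℝ) < 2) e1 e2
  rw [ct, ct]
  linarith

lemma ct_tau {τ : ℝ} (hτpos : 0 < τ)
    (hτ : Real.cosh (τ / 2) / Real.sinh (τ / 2) = τ / 2) : ct τ = 0 := by
  set E := Real.exp (τ / 2) with hEdef
  have hE1 : 1 < E := by
    have := Real.exp_lt_exp.mpr (by linarith : (0:ℝ) < τ / 2)
    rwa [Real.exp_zero] at this
  have hE0 : E ≠ 0 := by positivity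
  have hEτ : Real.exp τ = E * E := by
    rw [show τ = τ / 2 + τ / 2 by ring, Real.exp_add]
  have hiE : E⁻¹ < 1 := inv_lt_one_of_one_lt₀ hE1
  have hiE0 : (0:ℝ) < E⁻¹ := by positivity
  rw [Real.cosh_eq, Real.sinh_eq, Real.exp_neg] at hτ
  rw [ct, hEτ]
  have hd : E * E - 1 ≠ 0 := ne_of_gt (by nlinarith)
  have hd2 : E - E⁻¹ ≠ 0 := ne_of_gt (by linarith)
  field_simp at hτ ⊢
  rw [← hEdef] at hτ
  rw [← hτ]
  have hE2 : E ^ 2 - 1 ≠ 0 := by nlinarith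
  field_simp
  ring

theorem sigma_eq_tau' (b : ℝ) (hb : b ≠ 0) (τ : ℝ) (hτpos : 0 < τ)
    (hτ : Real.cosh (τ / 2) / Real.sinh (τ / 2) = τ / 2) :
    sInf {t : ℝ | 0 < t ∧ Summable (fun p : ℤ × ℕ =>
    Real.exp (-t * ((b * (p.1 : ℝ)) ^ 2 / 2 + (p.2 : ℝ))) *
      Real.exp ((b * (p.1 : ℝ)) ^ 2) * Lag p.2 (-2 * (b * (p.1 : ℝ)) ^ 2))} = τ := by
  have key : ∀ t : ℝ, 0 < t → (Summable (fun p : ℤ × ℕ =>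
      Real.exp (-t * ((b * (p.1 : ℝ)) ^ 2 / 2 + (p.2 : ℝ))) *
        Real.exp ((b * (p.1 : ℝ)) ^ 2) * Lag p.2 (-2 * (b * (p.1 : ℝ)) ^ 2)) ↔ ct t < 0) := by
    intro t ht
    have hz1 : Real.exp (-t) < 1 := by
      have := Real.exp_lt_exp.mpr (by linarith : -t < 0)
      rwa [Real.exp_zero] at this
    have hpos : (0:ℝ) < 1 - Real.exp (-t) := by linarith
    have hFnn : (0:ℝ × (ℤ × ℕ) → ℝ) ≤ 0 := le_refl _
    have hFnn' : ∀ p : ℤ × ℕ, 0 ≤ Real.exp (-t * ((b * (p.1 : ℝ)) ^ 2 / 2 + (p.2 : ℝ))) *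
        Real.exp ((b * (p.1 : ℝ)) ^ 2) * Lag p.2 (-2 * (b * (p.1 : ℝ)) ^ 2) := by
      intro p
      have h1 : -2 * (b * (p.1 : ℝ)) ^ 2 ≤ 0 := by nlinarith [sq_nonneg (b * (p.1 : ℝ))]
      exact mul_nonneg (mul_nonneg (Real.exp_pos _).le (Real.exp_pos _).le)
        (lag_nonneg _ h1)
    have inner : ∀ n : ℤ, HasSum (fun k : ℕ =>
        Real.exp (-t * ((b * (n : ℝ)) ^ 2 / 2 + (k : ℝ))) *
          Real.exp ((b * (n : ℝ)) ^ 2) * Lag k (-2 * (b * (n : ℝ)) ^ 2))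
        (Real.exp ((b * (n : ℝ)) ^ 2 * ct t) / (1 - Real.exp (-t))) :=
      fun n => inner_hasSum ht (sq_nonneg _)
    constructor
    · intro hs
      by_contra hc
      push_neg at hc
      have h2 := ((summable_prod_of_nonneg hFnn').mp hs).2
      have h3 : Summable (fun n : ℤ =>
          Real.exp ((b * (n : ℝ)) ^ 2 * ct t) / (1 - Real.exp (-t))) :=
        h2.congr fun n => (inner n).tsum_eq
      have h4 := h3.comp_injective (Nat.cast_injective : Function.Injective ((↑) : ℕ → ℤ))
      have hconst : Summable (fun _ : ℕ => 1 / (1 - Real.exp (-t))) := by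
        refine Summable.of_nonneg_of_le (fun _ => by positivity) (fun n => ?_) h4
        simp only [Function.comp_apply]
        have h1 : (1:ℝ) ≤ Real.exp ((b * ((n : ℤ) : ℝ)) ^ 2 * ct t) := by
          rw [← Real.exp_zero]
          exact Real.exp_le_exp.mpr (mul_nonneg (sq_nonneg _) hc)
        gcongr
      rw [summable_const_iff] at hconst
      have hgt : (0:ℝ) < 1 / (1 - Real.exp (-t)) := by positivity
      rw [hconst] at hgt
      exact lt_irrefl _ hgt
    · intro hc
      refine (summable_prod_of_nonneg hFnn').mpr ⟨fun n => (inner n).summable, ?_⟩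
      have hlt : b ^ 2 * ct t < 0 := mul_neg_of_pos_of_neg (by positivity) hc
      have h5 := (summable_exp_mul_sq hlt).div_const (1 - Real.exp (-t))
      have h6 : Summable (fun n : ℤ =>
          Real.exp ((b * (n : ℝ)) ^ 2 * ct t) / (1 - Real.exp (-t))) :=
        h5.congr fun n => by
          rw [show b ^ 2 * ct t * (n : ℝ) ^ 2 = (b * (n : ℝ)) ^ 2 * ct t from by ring]
      exact h6.congr fun n => ((inner n).tsum_eq).symm
  have hset : {t : ℝ | 0 < t ∧ Summable (fun p : ℤ × ℕ =>
      Real.exp (-t * ((b * (p.1 : ℝ)) ^ 2 / 2 + (p.2 : ℝ))) *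
        Real.exp ((b * (p.1 : ℝ)) ^ 2) * Lag p.2 (-2 * (b * (p.1 : ℝ)) ^ 2))} = Set.Ioi τ := by
    ext t
    simp only [Set.mem_setOf_eq, Set.mem_Ioi]
    constructor
    · rintro ⟨ht, hs⟩
      by_contra hle
      push_neg at hle
      have hct : ct t < 0 := (key t ht).mp hs
      rcases eq_or_lt_of_le hle with rfl | hlt
      · rw [ct_tau hτpos hτ] at hct
        exact lt_irrefl _ hct
      · have h := ct_strict_anti ht hlt
        rw [ct_tau hτpos hτ] at h
        linarith
    · intro hlt
      have ht : 0 < t := hτpos.trans hlt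
      refine ⟨ht, (key t ht).mpr ?_⟩
      have h := ct_strict_anti hτpos hlt
      rwa [ct_tau hτpos hτ] at h
  rw [hset, csInf_Ioi]

/-- For every `b ≠ 0`, `σ(b) = τ`, where `τ` is the unique positive solution of
`coth (τ/2) = τ/2`. -/
theorem sigma_eq_tau (b : ℝ) (hb : b ≠ 0) (τ : ℝ) (hτpos : 0 < τ)
    (hτ : Real.cosh (τ / 2) / Real.sinh (τ / 2) = τ / 2) :
    sigma b = τ := by
  unfold sigma
  exact sigma_eq_tau' b hb τ hτpos hτ
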